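/- arXiv:2004.13415 — 5 statements merged into one kernel-verified Lean document; each statement's English description precedes it below -/
import Mathlib

section
/- For all n ≥ k ≥ 1, L(n,k) = (1/k!)·∑_{j=0}^k (-1)^{k-j}·C(k,j)·⟨j⟩_n, where ⟨j⟩_n = j(j+1)⋯(j+n-1) is the rising factorial. -/
open Finset

/-- The unsigned Lah numbers `L(n,k) = (n!/k!)·C(n-1,k-1)`. -/
def lah (n k : ℕ) : ℕ :=
  if k = 0 then (if n = 0 then 1 else 0)
  else (n - 1).choose (k - 1) * (n.factorial / k.factorial)

/-- The rising factorial `⟨j⟩_n = j(j+1)⋯(j+n-1)`. -/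
def rise (j n : ℕ) : ℕ := ∏ i ∈ Finset.range n, (j + i)

lemma rise_eq (n j : ℕ) : rise j n = n.factorial * (n + j - 1).choose n := by
  induction n with
  | zero => simp [rise]
  | succ n ih =>
    rw [rise, Finset.prod_range_succ, ← rise, ih]
    cases j with
    | zero =>
      cases n with
      | zero => simp
      | succ m =>
        rw [Nat.choose_eq_zero_of_lt (by omega), Nat.choose_eq_zero_of_lt (by omega)]
        ring
    | succ j' =>
      have h : (n + j' + 1) * (n + j').choose n = (n + j' + 1).choose (n + 1) * (n + 1) :=
        Nat.add_one_mul_choose_eq (n + j') n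
      rw [show n + 1 + (j' + 1) - 1 = n + j' + 1 from by omega,
        show n + (j' + 1) - 1 = n + j' from by omega, Nat.factorial_succ,
        show j' + 1 + n = n + j' + 1 from by omega, mul_assoc,
        mul_comm ((n + j').choose n), h]
      ring

lemma rise_vander (n j : ℕ) (hn : 1 ≤ n) :
    rise j n = n.factorial * ∑ i ∈ Finset.range (n + 1), j.choose i * (n - 1).choose (n - i) := by
  rw [rise_eq]
  congr 1
  rw [show n + j - 1 = j + (n - 1) from by omega, Nat.add_choose_eq,
    Finset.Nat.sum_antidiagonal_eq_sum_range_succ (fun a b => j.choose a * (n - 1).choose b) n]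

lemma altQ (m : ℕ) : ∑ t ∈ Finset.range (m + 1), (-1 : ℚ) ^ t * (m.choose t : ℚ)
    = if m = 0 then 1 else 0 := by
  have h := Int.alternating_sum_range_choose (n := m)
  have h2 := congrArg (fun z : ℤ => (z : ℚ)) h
  push_cast at h2
  split_ifs at h2 ⊢ with hm <;> simpa [hm] using h2

lemma delta (k i : ℕ) :
    ∑ j ∈ Finset.range (k + 1), (-1 : ℚ) ^ (k - j) * (k.choose j : ℚ) * (j.choose i : ℚ)
    = if i = k then 1 else 0 := by
  by_cases hik : i ≤ k
  · have hsub : Finset.Ico i (k + 1) ⊆ Finset.range (k + 1) := by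
      intro x hx; simp only [Finset.mem_Ico] at hx; simp [hx.2]
    have hz : ∀ x ∈ Finset.range (k + 1), x ∉ Finset.Ico i (k + 1) →
        (-1 : ℚ) ^ (k - x) * (k.choose x : ℚ) * (x.choose i : ℚ) = 0 := by
      intro x hx hx'
      simp only [Finset.mem_range] at hx
      simp only [Finset.mem_Ico, not_and, not_lt] at hx'
      have hxi : x < i := by by_contra h; exact absurd hx (not_lt.2 (hx' (not_lt.1 h)))
      rw [Nat.choose_eq_zero_of_lt hxi]; ring
    rw [← Finset.sum_subset hsub hz, Finset.sum_Ico_eq_sum_range]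
    have hrange : k + 1 - i = (k - i) + 1 := by omega
    rw [hrange]
    have step : ∀ t ∈ Finset.range ((k - i) + 1),
        (-1 : ℚ) ^ (k - (i + t)) * (k.choose (i + t) : ℚ) * ((i + t).choose i : ℚ)
        = ((-1 : ℚ) ^ (k - i) * (k.choose i : ℚ)) * ((-1 : ℚ) ^ t * ((k - i).choose t : ℚ)) := by
      intro t ht
      simp only [Finset.mem_range] at ht
      have htki : t ≤ k - i := by omega
      have hc : k.choose (i + t) * (i + t).choose i = k.choose i * (k - i).choose t := by
        have := Nat.choose_mul (n := k) (k := i + t) (s := i) (by omega)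
        simpa [show i + t - i = t from by omega] using this
      have hsign : (-1 : ℚ) ^ (k - (i + t)) = (-1 : ℚ) ^ (k - i) * (-1 : ℚ) ^ t := by
        rw [← pow_add]
        have : (-1 : ℚ) ^ (k - (i + t)) * ((-1 : ℚ) ^ t * (-1 : ℚ) ^ t) =
            (-1 : ℚ) ^ (k - i + t) := by
          rw [← pow_add, ← pow_add]; congr 1; omega
        rw [← this]
        simp [← pow_add, ← two_mul, pow_mul]
      rw [hsign]
      have hc' : (k.choose (i + t) : ℚ) * ((i + t).choose i : ℚ)
          = (k.choose i : ℚ) * ((k - i).choose t : ℚ) := by exact_mod_cast hc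
      linear_combination ((-1 : ℚ) ^ (k - i) * (-1 : ℚ) ^ t) * hc'
    rw [Finset.sum_congr rfl step, ← Finset.mul_sum, altQ]
    by_cases hik' : i = k
    · simp [hik']
    · have : k - i ≠ 0 := by omega
      simp [this, hik']
  · push_neg at hik
    have : ∀ j ∈ Finset.range (k + 1),
        (-1 : ℚ) ^ (k - j) * (k.choose j : ℚ) * (j.choose i : ℚ) = 0 := by
      intro j hj
      simp only [Finset.mem_range] at hj
      rw [Nat.choose_eq_zero_of_lt (show j < i by omega)]; ring
    rw [Finset.sum_congr rfl this]
    simp [Nat.ne_of_gt hik, (by omega : i ≠ k)]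

/-- For all `n ≥ k ≥ 1`,
`L(n,k) = (1/k!)·∑_{j=0}^k (-1)^{k-j}·C(k,j)·⟨j⟩_n`. -/
theorem lah_explicit_sum (n k : ℕ) (hk : 1 ≤ k) (hkn : k ≤ n) :
    (lah n k : ℚ) = (1 / (k.factorial : ℚ)) *
      ∑ j ∈ Finset.range (k + 1),
        (-1 : ℚ) ^ (k - j) * (k.choose j : ℚ) * (rise j n : ℚ) := by
  have hn : 1 ≤ n := le_trans hk hkn
  have key : ∑ j ∈ Finset.range (k + 1),
      (-1 : ℚ) ^ (k - j) * (k.choose j : ℚ) * (rise j n : ℚ)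
      = (n.factorial : ℚ) * ((n - 1).choose (k - 1) : ℚ) := by
    have step1 : ∀ j ∈ Finset.range (k + 1),
        (-1 : ℚ) ^ (k - j) * (k.choose j : ℚ) * (rise j n : ℚ)
        = ∑ i ∈ Finset.range (k + 1),
            ((n.factorial : ℚ) * ((n - 1).choose (n - i) : ℚ)) *
              ((-1 : ℚ) ^ (k - j) * (k.choose j : ℚ) * (j.choose i : ℚ)) := by
      intro j hj
      simp only [Finset.mem_range] at hj
      have hjk : j ≤ k := by omega
      have hv : rise j n = n.factorial *
          ∑ i ∈ Finset.range (k + 1), j.choose i * (n - 1).choose (n - i) := by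
        rw [rise_vander n j hn]
        congr 1
        refine (Finset.sum_subset (Finset.range_subset_range.2 (by omega)) ?_).symm
        intro i hi hi'
        simp only [Finset.mem_range, not_lt] at hi'
        rw [Nat.choose_eq_zero_of_lt (show j < i by omega), zero_mul]
      rw [hv]
      push_cast
      rw [Finset.mul_sum, Finset.mul_sum]
      exact Finset.sum_congr rfl fun i _ => by ring
    rw [Finset.sum_congr rfl step1, Finset.sum_comm]
    have step2 : ∀ i ∈ Finset.range (k + 1),
        ∑ j ∈ Finset.range (k + 1),
          ((n.factorial : ℚ) * ((n - 1).choose (n - i) : ℚ)) *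
            ((-1 : ℚ) ^ (k - j) * (k.choose j : ℚ) * (j.choose i : ℚ))
        = if i = k then (n.factorial : ℚ) * ((n - 1).choose (n - i) : ℚ) else 0 := by
      intro i hi
      rw [← Finset.mul_sum, delta]
      split_ifs <;> ring
    rw [Finset.sum_congr rfl step2, Finset.sum_ite_eq' (Finset.range (k + 1)) k]
    have hcs : (n - 1).choose (n - k) = (n - 1).choose (k - 1) := by
      rw [show n - k = (n - 1) - (k - 1) from by omega]
      exact Nat.choose_symm (by omega)
    rw [if_pos (Finset.self_mem_range_succ k), hcs]
  rw [key]
  have hlah : lah n k = (n - 1).choose (k - 1) * (n.factorial / k.factorial) := by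
    rw [lah, if_neg (by omega)]
  rw [hlah]
  have hdvd : k.factorial ∣ n.factorial := Nat.factorial_dvd_factorial hkn
  have hcast : ((n.factorial / k.factorial : ℕ) : ℚ)
      = (n.factorial : ℚ) / (k.factorial : ℚ) :=
    Nat.cast_div hdvd (by exact_mod_cast k.factorial_ne_zero)
  push_cast [hcast]
  have hkf : (k.factorial : ℚ) ≠ 0 := by exact_mod_cast k.factorial_ne_zero
  field_simp
end

section
/- For n ≥ k, the connection identity (t|−α)_n = ∑_{k=0}^n ŵ_α(n,k)·(t|α)_k holds as an identity of polynomials in t, where (t|α)_m = ∏_{i=0}^{m-1}(t − iα) is the generalized falling factorial of increment α. -/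
open Finset Polynomial

/-- The translated Whitney-Lah numbers `ŵ_α(n,k) = α^{n-k}·L(n,k)`. -/
def whitneyLah (α : ℚ) (n k : ℕ) : ℚ := α ^ (n - k) * (lah n k : ℚ)

lemma lah_self (n : ℕ) : lah n n = 1 := by
  rcases n with _ | n
  · simp [lah]
  · simp [lah, Nat.div_self (Nat.factorial_pos _)]

lemma lah_zero {n : ℕ} (h : n ≠ 0) : lah n 0 = 0 := by simp [lah, h]

lemma lah_top {n : ℕ} (h : 1 ≤ n) : lah n (n+1) = 0 := by
  simp [lah, Nat.choose_eq_zero_of_lt (by omega : n - 1 < n)]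

lemma lah_rec {n j : ℕ} (h : j + 1 ≤ n) :
    lah (n+1) (j+1) = lah n j + (n+j+1) * lah n (j+1) := by
  rcases j with _ | m
  · have hn : n ≠ 0 := by omega
    simp [lah, hn, Nat.factorial_succ]
  · have h1 : (m+2) ≤ n := h
    have hd1 : (m+2).factorial ∣ (n+1).factorial :=
      Nat.factorial_dvd_factorial (by omega)
    have hd2 : (m+1).factorial ∣ n.factorial :=
      Nat.factorial_dvd_factorial (by omega)
    have hd3 : (m+2).factorial ∣ n.factorial :=
      Nat.factorial_dvd_factorial (by omega)
    have e1 : lah (n+1) (m+2) * (m+2).factorial = n.choose (m+1) * (n+1).factorial := by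
      show ((n+1-1).choose (m+2-1) * ((n+1).factorial / (m+2).factorial)) * (m+2).factorial
        = _
      rw [mul_assoc, Nat.div_mul_cancel hd1]; norm_num
    have e2 : lah n (m+1) * (m+1).factorial = (n-1).choose m * n.factorial := by
      show ((n-1).choose (m+1-1) * (n.factorial / (m+1).factorial)) * (m+1).factorial = _
      rw [mul_assoc, Nat.div_mul_cancel hd2]; norm_num
    have e3 : lah n (m+2) * (m+2).factorial = (n-1).choose (m+1) * n.factorial := by
      show ((n-1).choose (m+2-1) * (n.factorial / (m+2).factorial)) * (m+2).factorial = _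
      rw [mul_assoc, Nat.div_mul_cancel hd3]; norm_num
    have hn1 : n - 1 + 1 = n := by omega
    have pascal : n.choose (m+1) = (n-1).choose m + (n-1).choose (m+1) := by
      conv_lhs => rw [← hn1]
      exact Nat.choose_succ_succ (n-1) m
    have cross : (n-1).choose (m+1) * (m+1) = (n-1).choose m * (n - 1 - m) :=
      Nat.choose_succ_right_eq (n-1) m
    -- work in ℚ
    have hfpos : (0:ℚ) < ((m+2).factorial : ℚ) := by exact_mod_cast Nat.factorial_pos _
    apply Nat.cast_injective (R := ℚ)
    have goalQ : (lah (n+1) (m+2) : ℚ) * (m+2).factorial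
        = ((lah n (m+1) : ℚ) + (n+m+2) * lah n (m+2)) * (m+2).factorial := by
      have q1 : (lah (n+1) (m+2) : ℚ) * (m+2).factorial = n.choose (m+1) * (n+1).factorial := by
        exact_mod_cast congrArg (Nat.cast : ℕ → ℚ) e1
      have q2 : (lah n (m+1) : ℚ) * (m+1).factorial = (n-1).choose m * n.factorial := by
        exact_mod_cast congrArg (Nat.cast : ℕ → ℚ) e2
      have q3 : (lah n (m+2) : ℚ) * (m+2).factorial = (n-1).choose (m+1) * n.factorial := by
        exact_mod_cast congrArg (Nat.cast : ℕ → ℚ) e3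
      have pq : (n.choose (m+1) : ℚ) = (n-1).choose m + (n-1).choose (m+1) := by
        exact_mod_cast pascal
      have crossQ : ((n-1).choose (m+1) : ℚ) * (m+1) = (n-1).choose m * ((n:ℚ) - 1 - m) := by
        have := congrArg (Nat.cast : ℕ → ℚ) cross
        push_cast at this
        rw [this, Nat.cast_sub (by omega : m ≤ n - 1), Nat.cast_sub (by omega : 1 ≤ n)]
        push_cast; ring
      have hf1 : ((n+1).factorial : ℚ) = (n+1) * n.factorial := by
        push_cast [Nat.factorial_succ]; ring
      have hf2 : ((m+2).factorial : ℚ) = (m+2) * (m+1).factorial := by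
        push_cast [Nat.factorial_succ]; ring
      linear_combination q1 + ((n:ℚ)+1) * (n.factorial : ℚ) * pq
        + (n.choose (m+1) : ℚ) * hf1 - ((n:ℚ)+(m:ℚ)+2) * q3
        - (lah n (m+1) : ℚ) * hf2 - ((m:ℚ)+2) * q2 - (n.factorial : ℚ) * crossQ
    have := mul_right_cancel₀ hfpos.ne' goalQ
    push_cast at this ⊢
    linarith [this]

lemma w_rec (α : ℚ) {n k : ℕ} (hn : 1 ≤ n) (hk : k ≤ n + 1) :
    whitneyLah α (n+1) k =
      (if k = 0 then 0 else whitneyLah α n (k-1)) + α * ((n:ℚ)+(k:ℚ)) * whitneyLah α n k := by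
  rcases k with _ | j
  · simp [whitneyLah, lah_zero (by omega : n + 1 ≠ 0), lah_zero (by omega : n ≠ 0)]
  · rcases eq_or_lt_of_le hk with he | hlt
    · -- k = n+1
      have hj : j = n := by omega
      subst hj
      simp [whitneyLah, lah_self, lah_top hn, Nat.sub_self]
    · -- j+1 ≤ n
      have hj : j + 1 ≤ n := by omega
      have hrec := lah_rec hj
      simp only [whitneyLah, if_neg (Nat.succ_ne_zero j), Nat.succ_sub_one, hrec]
      have e1 : n + 1 - (j+1) = n - j := by omega
      have e2 : n - j = (n - (j+1)) + 1 := by omega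
      rw [e1, e2, pow_succ]
      push_cast
      ring

/-- The connection identity
`(t|−α)_n = ∑_{k=0}^n ŵ_α(n,k)·(t|α)_k` as an identity of polynomials in `t`,
where `(t|α)_m = ∏_{i=0}^{m-1}(t − iα)`, so `(t|−α)_n = ∏_{i=0}^{n-1}(t + iα)`. -/
theorem whitneyLah_connection (α : ℚ) (n : ℕ) :
    (∏ i ∈ Finset.range n, (Polynomial.X + Polynomial.C (α * i)) : Polynomial ℚ) =
      ∑ k ∈ Finset.range (n + 1), Polynomial.C (whitneyLah α n k) *
        ∏ i ∈ Finset.range k, (Polynomial.X - Polynomial.C (α * i)) := by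
  induction n with
  | zero => simp [whitneyLah, lah]
  | succ n ih =>
    rcases Nat.eq_zero_or_pos n with h0 | hn
    · subst h0
      simp [whitneyLah, lah, Finset.sum_range_succ]
    · rw [Finset.prod_range_succ, ih, Finset.sum_mul]
      have key : ∀ k ∈ Finset.range (n+1),
          (Polynomial.C (whitneyLah α n k) * ∏ i ∈ Finset.range k, (X - C (α * i)))
              * (X + C (α * n))
            = Polynomial.C (whitneyLah α n k) * ∏ i ∈ Finset.range (k+1), (X - C (α * i))
              + Polynomial.C (α * ((n:ℚ)+(k:ℚ)) * whitneyLah α n k)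
                * ∏ i ∈ Finset.range k, (X - C (α * i)) := by
        intro k _
        simp only [Finset.prod_range_succ, map_mul, map_add]
        ring
      rw [Finset.sum_congr rfl key, Finset.sum_add_distrib]
      -- now transform RHS
      have rhs_eq : ∀ k ∈ Finset.range (n+2),
          Polynomial.C (whitneyLah α (n+1) k) * ∏ i ∈ Finset.range k, (X - C (α * i))
            = Polynomial.C (if k = 0 then 0 else whitneyLah α n (k-1))
                * ∏ i ∈ Finset.range k, (X - C (α * i))
              + Polynomial.C (α * ((n:ℚ)+(k:ℚ)) * whitneyLah α n k)
                * ∏ i ∈ Finset.range k, (X - C (α * i)) := by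
        intro k hk
        rw [w_rec α hn (by simpa using Nat.lt_succ_iff.mp (Finset.mem_range.mp hk)), map_add,
          add_mul]
      rw [Finset.sum_congr rfl rhs_eq, Finset.sum_add_distrib]
      congr 1
      · -- shift sum
        conv_rhs => rw [Finset.sum_range_succ']
        simp
      · conv_rhs => rw [Finset.sum_range_succ]
        have h0 : whitneyLah α n (n+1) = 0 := by
          simp [whitneyLah, lah_top hn]
        simp [h0]
end

section
/- For all k ≥ 2 and n ≥ k − 1, ∑_{j=1}^k (−1)^j · L(k,j) · (n+j)! = (−1)^k · n!·(n+1)!/(n−k+1)!, where L(k,j) are the unsigned Lah numbers. -/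
open Finset

lemma lah_mul_factorial (k j : ℕ) (hk : 1 ≤ k) (hj : 1 ≤ j) :
    lah k j * j.factorial = (k-1).choose (j-1) * k.factorial := by
  unfold lah
  rw [if_neg (by omega)]
  rcases le_or_gt j k with h | h
  · rw [mul_assoc, Nat.div_mul_cancel (Nat.factorial_dvd_factorial h)]
  · have h0 : (k-1).choose (j-1) = 0 := Nat.choose_eq_zero_of_lt (by omega)
    simp [h0]

lemma lah_zero_s8 (k : ℕ) (hk : 1 ≤ k) : lah k 0 = 0 := by simp [lah]; omega

lemma lah_eq_zero_of_lt (k j : ℕ) (hk : 1 ≤ k) (h : k < j) : lah k j = 0 := by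
  unfold lah
  rw [if_neg (by omega), Nat.choose_eq_zero_of_lt (by omega), zero_mul]

lemma lah_rec_s8 (k i : ℕ) (hk : 2 ≤ k) :
    (lah (k+1) (1+i) : ℚ) = (k + i + 1) * lah k (i+1) + lah k i := by
  rw [add_comm 1 i]
  rcases Nat.eq_zero_or_pos i with rfl | hi
  · have a1 : lah (k+1) 1 = (k+1).factorial := by simp [lah]
    have a2 : lah k 1 = k.factorial := by simp [lah, (by omega : ¬ k = 0)]
    simp [a1, a2, lah_zero_s8 k (by omega), Nat.factorial_succ]
  rcases le_or_gt i k with hik | hik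
  swap
  · rw [lah_eq_zero_of_lt (k+1) (i+1) (by omega) (by omega),
        lah_eq_zero_of_lt k (i+1) (by omega) (by omega),
        lah_eq_zero_of_lt k i (by omega) (by omega)]
    push_cast; ring
  -- main case 1 ≤ i ≤ k
  have hfac : ((i+1).factorial : ℚ) ≠ 0 := by positivity
  apply mul_right_cancel₀ hfac
  have h1 : (lah (k+1) (i+1) : ℚ) * ((i+1).factorial : ℚ)
      = (k.choose i : ℚ) * ((k+1).factorial : ℚ) := by
    exact_mod_cast congrArg (Nat.cast (R := ℚ))
      (by simpa using lah_mul_factorial (k+1) (i+1) (by omega) (by omega))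
  have h2 : (lah k (i+1) : ℚ) * ((i+1).factorial : ℚ)
      = ((k-1).choose i : ℚ) * (k.factorial : ℚ) := by
    exact_mod_cast congrArg (Nat.cast (R := ℚ))
      (by simpa using lah_mul_factorial k (i+1) (by omega) (by omega))
  have h3 : (lah k i : ℚ) * (i.factorial : ℚ)
      = ((k-1).choose (i-1) : ℚ) * (k.factorial : ℚ) := by
    exact_mod_cast congrArg (Nat.cast (R := ℚ))
      (lah_mul_factorial k i (by omega) hi)
  have f1 : ((i+1).factorial : ℚ) = (i+1) * i.factorial := by
    push_cast [Nat.factorial_succ]; ring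
  have fk : ((k+1).factorial : ℚ) = (k+1) * k.factorial := by
    push_cast [Nat.factorial_succ]; ring
  have pascal : (k.choose i : ℚ) = (k-1).choose i + (k-1).choose (i-1) := by
    have := Nat.choose_succ_succ (k-1) (i-1)
    simp only [Nat.succ_eq_add_one] at this
    rw [(by omega : k - 1 + 1 = k), (by omega : i - 1 + 1 = i)] at this
    exact_mod_cast this.trans (Nat.add_comm _ _)
  have hsr : ((k-1).choose i : ℚ) * i = ((k-1).choose (i-1)) * ((k:ℚ) - i) := by
    have h := Nat.choose_succ_right_eq (k-1) (i-1)
    rw [(by omega : i - 1 + 1 = i), (by omega : k - 1 - (i-1) = k - i)] at h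
    have h' := congrArg (Nat.cast (R := ℚ)) h
    push_cast [Nat.cast_sub hik] at h'
    linarith [h']
  linear_combination h1 - ((k:ℚ)+(i:ℚ)+1)*h2 - ((i:ℚ)+1)*h3 - (lah k i : ℚ) * f1
    + (k.choose i : ℚ) * fk + ((k:ℚ)+1) * (k.factorial : ℚ) * pascal
    - (k.factorial : ℚ) * hsr

lemma lah_aux : ∀ k, 2 ≤ k → ∀ n, k - 1 ≤ n →
    ∑ i ∈ Finset.range k, (-1:ℚ)^(1+i) * (lah k (1+i) : ℚ) * ((n+(1+i)).factorial : ℚ)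
      = (-1:ℚ)^k * (n.factorial : ℚ) * ((n+1).factorial : ℚ) / ((n+1-k).factorial : ℚ) := by
  intro k hk
  induction k, hk using Nat.le_induction with
  | base =>
    intro n hn
    obtain ⟨m, rfl⟩ : ∃ m, n = m + 1 := ⟨n - 1, by omega⟩
    rw [Finset.sum_range_succ, Finset.sum_range_one]
    have a1 : lah 2 1 = 2 := by decide
    have a2 : lah 2 2 = 1 := by decide
    norm_num [a1, a2, (by omega : m+1+1 = m+2), (by omega : m+1+2 = m+3),
      (by omega : m+1+1-2 = m)]
    have hm : (m.factorial : ℚ) ≠ 0 := by positivity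
    field_simp
    push_cast [Nat.factorial_succ, (by omega : m+3 = m+2+1), (by omega : m+2 = m+1+1)]
    ring
  | succ k hk IH =>
    intro n hn
    have hn' : k - 1 ≤ n := by omega
    have hkn : k ≤ n := by omega
    have step : ∀ i ∈ Finset.range (k+1),
        (-1:ℚ)^(1+i) * (lah (k+1) (1+i) : ℚ) * ((n+(1+i)).factorial : ℚ)
        = (-1:ℚ)^(1+i) * ((k + i + 1) * lah k (i+1) + lah k i) * ((n+(1+i)).factorial : ℚ) := by
      intro i _
      rw [lah_rec_s8 k i hk]
    rw [Finset.sum_congr rfl step]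
    have split : ∀ i, (-1:ℚ)^(1+i) * ((k + i + 1) * lah k (i+1) + lah k i) * ((n+(1+i)).factorial : ℚ)
        = (-1:ℚ)^(1+i) * ((k:ℚ) + i + 1) * (lah k (i+1) : ℚ) * ((n+(1+i)).factorial : ℚ)
          + (-1:ℚ)^(1+i) * (lah k i : ℚ) * ((n+(1+i)).factorial : ℚ) := by
      intro i; ring
    simp only [split, Finset.sum_add_distrib]
    rw [Finset.sum_range_succ ( f:= fun i => (-1:ℚ)^(1+i) * ((k:ℚ) + i + 1) * (lah k (i+1) : ℚ) * ((n+(1+i)).factorial : ℚ))]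
    rw [lah_eq_zero_of_lt k (k+1) (by omega) (by omega)]
    rw [Finset.sum_range_succ' (f := fun i => (-1:ℚ)^(1+i) * (lah k i : ℚ) * ((n+(1+i)).factorial : ℚ))]
    rw [lah_zero_s8 k (by omega)]
    norm_num
    have comb : ∀ i ∈ Finset.range k,
        (-1:ℚ)^(1+i) * ((k:ℚ) + i + 1) * (lah k (i+1) : ℚ) * ((n+(1+i)).factorial : ℚ)
          + (-1:ℚ)^(1+(i+1)) * (lah k (i+1) : ℚ) * ((n+(1+(i+1))).factorial : ℚ)
        = ((k:ℚ) - n - 1) * ((-1:ℚ)^(1+i) * (lah k (1+i) : ℚ) * ((n+(1+i)).factorial : ℚ)) := by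
      intro i _
      have e1 : n+(1+(i+1)) = (n+(1+i)) + 1 := by omega
      rw [e1, Nat.factorial_succ]
      have : ((n+(1+i)+1 : ℕ) : ℚ) = (n:ℚ) + i + 2 := by push_cast; ring
      push_cast [this]
      rw [(by omega : 1+i = i+1)]
      ring
    rw [← Finset.sum_add_distrib, Finset.sum_congr rfl comb, ← Finset.mul_sum, IH n hn']
    obtain ⟨m, rfl⟩ : ∃ m, n = k + m := ⟨n - k, by omega⟩
    rw [(by omega : k + m + 1 - k = m + 1), (by omega : k + m + 1 - (k+1) = m),
      Nat.factorial_succ m]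
    have hm : (m.factorial : ℚ) ≠ 0 := by positivity
    have hm1 : ((m:ℚ) + 1) ≠ 0 := by positivity
    push_cast
    rw [pow_succ]
    field_simp
    ring

/-- For all `k ≥ 2` and `n ≥ k − 1`,
`∑_{j=1}^k (−1)^j · L(k,j) · (n+j)! = (−1)^k · n!·(n+1)!/(n−k+1)!`. -/
theorem lah_alternating_sum (k n : ℕ) (hk : 2 ≤ k) (hn : k - 1 ≤ n) :
    ∑ j ∈ Finset.Icc 1 k, (-1 : ℚ) ^ j * (lah k j : ℚ) * ((n + j).factorial : ℚ) =
      (-1 : ℚ) ^ k * (n.factorial : ℚ) * ((n + 1).factorial : ℚ) /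
        ((n + 1 - k).factorial : ℚ) := by
  rw [← Finset.Ico_add_one_right_eq_Icc, Finset.sum_Ico_eq_sum_range, (by omega : k + 1 - 1 = k)]
  exact lah_aux k hk n hn
end

section
/- The Bell numbers satisfy B_n = ∑_{k=1}^n (−1)^{n−k} · (∑_{ℓ=1}^k L(k,ℓ)) · S(n,k), where L(k,ℓ) are the unsigned Lah numbers and S(n,k) the Stirling numbers of the second kind. -/
open Finset Polynomial

/-- The Stirling numbers of the second kind. -/
def stirlingSecond : ℕ → ℕ → ℕ
  | 0, 0 => 1
  | 0, _ + 1 => 0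
  | _ + 1, 0 => 0
  | n + 1, k + 1 => stirlingSecond n k + (k + 1) * stirlingSecond n (k + 1)

/-- The Bell numbers `B_n = ∑_{k=0}^n S(n,k)`. -/
def bell (n : ℕ) : ℕ := ∑ k ∈ Finset.range (n + 1), stirlingSecond n k


/-- Unsigned Stirling numbers of the first kind. -/
def stirlingFirst : ℕ → ℕ → ℕ
  | 0, 0 => 1
  | 0, _ + 1 => 0
  | _ + 1, 0 => 0
  | n + 1, k + 1 => stirlingFirst n k + n * stirlingFirst n (k + 1)

/-- Lah numbers, recursive version. -/
def lahRec : ℕ → ℕ → ℕ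
  | 0, 0 => 1
  | 0, _ + 1 => 0
  | _ + 1, 0 => 0
  | k + 1, l + 1 => lahRec k l + (k + l + 1) * lahRec k (l + 1)

lemma stirlingSecond_eq_zero : ∀ {n k : ℕ}, n < k → stirlingSecond n k = 0
  | 0, _ + 1, _ => rfl
  | n + 1, k + 1, h => by
    have h1 : n < k := Nat.lt_of_succ_lt_succ h
    simp [stirlingSecond, stirlingSecond_eq_zero h1,
      stirlingSecond_eq_zero (Nat.lt_succ_of_lt h1)]

lemma stirlingFirst_eq_zero : ∀ {n k : ℕ}, n < k → stirlingFirst n k = 0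
  | 0, _ + 1, _ => rfl
  | n + 1, k + 1, h => by
    have h1 : n < k := Nat.lt_of_succ_lt_succ h
    simp [stirlingFirst, stirlingFirst_eq_zero h1,
      stirlingFirst_eq_zero (Nat.lt_succ_of_lt h1)]

lemma lahRec_eq_zero : ∀ {n k : ℕ}, n < k → lahRec n k = 0
  | 0, _ + 1, _ => rfl
  | n + 1, k + 1, h => by
    have h1 : n < k := Nat.lt_of_succ_lt_succ h
    simp [lahRec, lahRec_eq_zero h1, lahRec_eq_zero (Nat.lt_succ_of_lt h1)]

lemma stirlingSecond_zero (n : ℕ) : stirlingSecond (n + 1) 0 = 0 := rfl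
lemma stirlingFirst_zero (n : ℕ) : stirlingFirst (n + 1) 0 = 0 := rfl
lemma lahRec_zero (n : ℕ) : lahRec (n + 1) 0 = 0 := rfl

lemma X_pow_eq_sum_stirling (n : ℕ) :
    (X : ℤ[X]) ^ n = ∑ k ∈ range (n + 1), C (stirlingSecond n k : ℤ) * descPochhammer ℤ k := by
  induction n with
  | zero => simp [stirlingSecond]
  | succ n ih =>
    have step : (X:ℤ[X])^(n+1)
        = ∑ k ∈ range (n+1), (C (stirlingSecond n k : ℤ) * descPochhammer ℤ (k+1)
            + C ((k : ℤ) * stirlingSecond n k) * descPochhammer ℤ k) := by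
      rw [pow_succ, ih, Finset.sum_mul]
      apply Finset.sum_congr rfl; intro k _
      rw [descPochhammer_succ_right]
      simp only [map_mul, map_add, Polynomial.C_eq_natCast]
      ring
    rw [step, Finset.sum_add_distrib]
    rw [Finset.sum_range_succ' (fun k => C (stirlingSecond (n+1) k : ℤ) * descPochhammer ℤ k) (n+1)]
    have h0 : C (stirlingSecond (n+1) 0 : ℤ) * descPochhammer ℤ 0 = 0 := by
      simp [stirlingSecond_zero]
    rw [h0, add_zero]
    have hrec : ∀ k, (stirlingSecond (n+1) (k+1) : ℤ)
        = stirlingSecond n k + (k+1) * stirlingSecond n (k+1) := by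
      intro k; simp only [stirlingSecond]; push_cast; ring
    have : ∑ k ∈ range (n+1), C (stirlingSecond (n+1) (k+1) : ℤ) * descPochhammer ℤ (k+1)
        = ∑ k ∈ range (n+1), (C (stirlingSecond n k : ℤ) * descPochhammer ℤ (k+1)
            + C (((k:ℤ)+1) * stirlingSecond n (k+1)) * descPochhammer ℤ (k+1)) := by
      apply Finset.sum_congr rfl; intro k _
      rw [hrec k]
      simp only [map_add, map_mul, Polynomial.C_eq_natCast]
      ring
    rw [this, Finset.sum_add_distrib]
    congr 1
    -- remains: ∑ k ∈ range (n+1), C (k * S n k) * desc k = ∑ k, C ((k+1) * S n (k+1)) * desc (k+1)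
    rw [Finset.sum_range_succ' (fun k => C ((k:ℤ) * stirlingSecond n k) * descPochhammer ℤ k) n]
    rw [Finset.sum_range_succ]
    have htop : C (((n:ℤ)+1) * stirlingSecond n (n+1)) * descPochhammer ℤ (n+1) = 0 := by
      simp [stirlingSecond_eq_zero (Nat.lt_succ_self n)]
    rw [htop, add_zero]
    simp

lemma desc_eq_sum_stirlingFirst (k : ℕ) :
    descPochhammer ℤ k
      = ∑ j ∈ range (k + 1), C ((-1:ℤ)^(k+j) * stirlingFirst k j) * X^j := by
  induction k with
  | zero => simp [stirlingFirst]
  | succ k ih =>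
    have step : descPochhammer ℤ (k+1)
        = ∑ j ∈ range (k+1), (C ((-1:ℤ)^(k+j) * stirlingFirst k j) * X^(j+1)
            + C ((-1:ℤ)^(k+j+1) * ((k:ℤ) * stirlingFirst k j)) * X^j) := by
      rw [descPochhammer_succ_right, ih, Finset.sum_mul]
      apply Finset.sum_congr rfl; intro j _
      simp only [map_mul, map_add, map_pow, map_neg, map_one, Polynomial.C_eq_natCast, pow_succ]
      ring
    rw [step, Finset.sum_add_distrib]
    rw [Finset.sum_range_succ' (fun j => C ((-1:ℤ)^(k+1+j) * stirlingFirst (k+1) j) * X^j) (k+1)]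
    have h0 : C ((-1:ℤ)^(k+1+0) * stirlingFirst (k+1) 0) * X^0 = 0 := by
      simp [stirlingFirst_zero]
    rw [h0, add_zero]
    have hrec : ∀ j, ((-1:ℤ)^(k+1+(j+1)) * stirlingFirst (k+1) (j+1))
        = (-1:ℤ)^(k+j) * stirlingFirst k j + (-1:ℤ)^(k+j) * ((k:ℤ) * stirlingFirst k (j+1)) := by
      intro j
      have : ((stirlingFirst (k+1) (j+1) : ℤ)) = stirlingFirst k j + k * stirlingFirst k (j+1) := by
        simp only [stirlingFirst]; push_cast; ring
      rw [this]
      have hs : (-1:ℤ)^(k+1+(j+1)) = (-1:ℤ)^(k+j) := by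
        have : k+1+(j+1) = (k+j)+2 := by ring
        rw [this, pow_add]; norm_num
      rw [hs]; ring
    have : ∑ j ∈ range (k+1), C ((-1:ℤ)^(k+1+(j+1)) * stirlingFirst (k+1) (j+1)) * X^(j+1)
        = ∑ j ∈ range (k+1), (C ((-1:ℤ)^(k+j) * stirlingFirst k j) * X^(j+1)
            + C ((-1:ℤ)^(k+j) * ((k:ℤ) * stirlingFirst k (j+1))) * X^(j+1)) := by
      apply Finset.sum_congr rfl; intro j _
      rw [hrec j, map_add, add_mul]
    rw [this, Finset.sum_add_distrib]
    congr 1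
    -- ∑ j∈range(k+1), C((-1)^(k+j+1) k u k j) X^j = ∑ j∈range(k+1), C((-1)^(k+j) k u k (j+1)) X^(j+1)
    rw [Finset.sum_range_succ' (fun j => C ((-1:ℤ)^(k+j+1) * ((k:ℤ) * stirlingFirst k j)) * X^j) k]
    rw [Finset.sum_range_succ]
    have htop : C ((-1:ℤ)^(k+k) * ((k:ℤ) * stirlingFirst k (k+1))) * X^(k+1) = 0 := by
      simp [stirlingFirst_eq_zero (Nat.lt_succ_self k)]
    have hbot : C ((-1:ℤ)^(k+0+1) * ((k:ℤ) * stirlingFirst k 0)) * X^0 = 0 := by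
      cases k with
      | zero => simp
      | succ m => simp [stirlingFirst_zero]
    rw [htop, add_zero, hbot]
    simp only [add_zero]
    apply Finset.sum_congr rfl; intro j _
    have hs : (-1:ℤ)^(k+(j+1)+1) = (-1:ℤ)^(k+j) := by
      have : k+(j+1)+1 = (k+j)+2 := by ring
      rw [this, pow_add]; norm_num
    rw [hs]

lemma stirling_orthogonality (n j : ℕ) (hj : j ≤ n) :
    ∑ k ∈ range (n+1), (stirlingSecond n k : ℤ) * ((-1:ℤ)^(k+j) * stirlingFirst k j)
      = if j = n then 1 else 0 := by
  have h1 : (X:ℤ[X])^n = ∑ j' ∈ range (n+1),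
      C (∑ k ∈ range (n+1), (stirlingSecond n k : ℤ) * ((-1:ℤ)^(k+j') * stirlingFirst k j'))
        * X^j' := by
    rw [X_pow_eq_sum_stirling]
    have hterm : ∀ k ∈ range (n+1), C (stirlingSecond n k:ℤ) * descPochhammer ℤ k
        = ∑ j' ∈ range (n+1),
            C ((stirlingSecond n k:ℤ) * ((-1:ℤ)^(k+j') * stirlingFirst k j')) * X^j' := by
      intro k hk
      have hk' := Finset.mem_range.1 hk
      rw [desc_eq_sum_stirlingFirst, Finset.mul_sum]
      have hshape : ∀ j', C (stirlingSecond n k:ℤ) * (C ((-1:ℤ)^(k+j') * stirlingFirst k j') * X^j')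
          = C ((stirlingSecond n k:ℤ) * ((-1:ℤ)^(k+j') * stirlingFirst k j')) * X^j' := by
        intro j'; simp only [map_mul]; ring
      simp only [hshape]
      apply Finset.sum_subset
      · exact Finset.range_subset_range.2 (by omega)
      · intro x _ hxk
        have hx : k < x := by by_contra h; exact hxk (Finset.mem_range.2 (by omega))
        simp [stirlingFirst_eq_zero hx]
    rw [Finset.sum_congr rfl hterm, Finset.sum_comm]
    apply Finset.sum_congr rfl; intro j' _
    rw [← Finset.sum_mul, map_sum]
  have h2 := congrArg (fun p => Polynomial.coeff p j) h1
  simp only [Polynomial.coeff_X_pow, Polynomial.finset_sum_coeff, Polynomial.coeff_C_mul] at h2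
  have h3 : (∑ x ∈ range (n+1),
      ((∑ k ∈ range (n+1), (stirlingSecond n k:ℤ) * ((-1:ℤ)^(k+x) * stirlingFirst k x))
        * (if j = x then 1 else 0)))
      = ∑ k ∈ range (n+1), (stirlingSecond n k:ℤ) * ((-1:ℤ)^(k+j) * stirlingFirst k j) := by
    rw [Finset.sum_eq_single j]
    · simp
    · intro b _ hb; simp [Ne.symm hb]
    · intro h; exact absurd (Finset.mem_range.2 (by omega)) h
  rw [← h3]; exact h2.symm

lemma lahRec_eq_sum (k : ℕ) : ∀ l, lahRec k l
    = ∑ j ∈ range (k+1), stirlingFirst k j * stirlingSecond j l := by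
  induction k with
  | zero => intro l; cases l <;> simp [lahRec, stirlingFirst, stirlingSecond]
  | succ k ih =>
    intro l
    cases l with
    | zero =>
      rw [show lahRec (k+1) 0 = 0 from rfl]
      symm; apply Finset.sum_eq_zero
      intro j hj
      match j with
      | 0 => simp [stirlingFirst_zero]
      | j+1 => simp [stirlingSecond]
    | succ l =>
      have e1 : ∑ j ∈ range (k+2), stirlingFirst (k+1) j * stirlingSecond j (l+1)
          = ∑ j ∈ range (k+1), stirlingFirst (k+1) (j+1) * stirlingSecond (j+1) (l+1) := by
        rw [Finset.sum_range_succ'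
          (fun j => stirlingFirst (k+1) j * stirlingSecond j (l+1)) (k+1)]
        simp [stirlingFirst_zero]
      rw [e1]
      have e2 : ∀ j, stirlingFirst (k+1) (j+1) * stirlingSecond (j+1) (l+1)
          = stirlingFirst k j * stirlingSecond j l
            + (l+1) * (stirlingFirst k j * stirlingSecond j (l+1))
            + k * (stirlingFirst k (j+1) * stirlingSecond (j+1) (l+1)) := by
        intro j; simp only [stirlingFirst, stirlingSecond]; ring
      simp only [e2]
      rw [Finset.sum_add_distrib, Finset.sum_add_distrib, ← Finset.mul_sum, ← Finset.mul_sum]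
      have e3 : ∑ j ∈ range (k+1), stirlingFirst k (j+1) * stirlingSecond (j+1) (l+1)
          = ∑ j ∈ range (k+1), stirlingFirst k j * stirlingSecond j (l+1) := by
        have h := Finset.sum_range_succ'
          (fun j => stirlingFirst k j * stirlingSecond j (l+1)) (k+1)
        have hf0 : stirlingFirst k 0 * stirlingSecond 0 (l+1) = 0 := by simp [stirlingSecond]
        have htop : stirlingFirst k (k+1) * stirlingSecond (k+1) (l+1) = 0 := by
          simp [stirlingFirst_eq_zero (Nat.lt_succ_self k)]
        rw [Finset.sum_range_succ, htop, add_zero, hf0, add_zero] at h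
        exact h.symm
      rw [e3, ← ih l, ← ih (l+1)]
      simp only [lahRec]; ring

lemma lahRec_closed (k : ℕ) : ∀ t : ℕ, lahRec (k+1) (t+1)
    = k.choose t * ((k+1).factorial / (t+1).factorial) := by
  induction k with
  | zero =>
    intro t; cases t <;> simp [lahRec, Nat.factorial]
  | succ k ih =>
    intro l
    have hunfold : lahRec (k+2) (l+1) = lahRec (k+1) l + (k+1+l+1) * lahRec (k+1) (l+1) := rfl
    cases l with
    | zero =>
      rw [hunfold, ih 0]
      simp [lahRec_zero, Nat.factorial]
    | succ t =>
      rw [hunfold, ih t, ih (t+1)]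
      rcases lt_trichotomy t k with hkt | rfl | hkt
      · -- t < k : the main case
        have hd1 : (t+1).factorial ∣ (k+1).factorial :=
          Nat.factorial_dvd_factorial (by omega)
        have hd2 : (t+2).factorial ∣ (k+1).factorial :=
          Nat.factorial_dvd_factorial (by omega)
        set A := (k+1).factorial / (t+1).factorial with hAdef
        set B := (k+1).factorial / (t+2).factorial with hBdef
        set Cc := (k+2).factorial / (t+2).factorial with hCdef
        have hB : B * (t+2).factorial = (k+1).factorial := Nat.div_mul_cancel hd2
        have hA : A = B * (t+2) := by
          have h1 : A * (t+1).factorial = (k+1).factorial := Nat.div_mul_cancel hd1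
          have h2 : A * (t+1).factorial = (B*(t+2)) * (t+1).factorial := by
            rw [h1, ← hB]
            rw [show (t+2).factorial = (t+2) * (t+1).factorial from rfl]
            ring
          exact Nat.eq_of_mul_eq_mul_right (Nat.factorial_pos _) h2
        have hC : Cc = (k+2) * B := by
          have hd3 : (t+2).factorial ∣ (k+2).factorial :=
            Nat.factorial_dvd_factorial (by omega)
          have h1 : Cc * (t+2).factorial = (k+2).factorial := Nat.div_mul_cancel hd3
          have h2 : Cc * (t+2).factorial = ((k+2)*B) * (t+2).factorial := by
            rw [h1, show (k+2).factorial = (k+2) * (k+1).factorial from rfl, ← hB]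
            ring
          exact Nat.eq_of_mul_eq_mul_right (Nat.factorial_pos _) h2
        have key : k.choose t * (t+2) + (k+1+(t+1)+1) * k.choose (t+1)
            = (k+1).choose (t+1) * (k+2) := by
          have h1 := Nat.choose_succ_right_eq k t
          rw [Nat.choose_succ_succ]
          zify [hkt.le] at h1 ⊢
          linear_combination h1
        calc k.choose t * A + (k+1+(t+1)+1) * (k.choose (t+1) * B)
            = (k.choose t * (t+2) + (k+1+(t+1)+1) * k.choose (t+1)) * B := by
              rw [hA]; ring
          _ = ((k+1).choose (t+1) * (k+2)) * B := by rw [key]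
          _ = (k+1).choose (t+1) * Cc := by rw [hC]; ring
      · -- t = k
        simp [Nat.choose_self, Nat.choose_succ_self_right,
          Nat.choose_eq_zero_of_lt (Nat.lt_succ_self t),
          Nat.div_self (Nat.factorial_pos (t+1)), Nat.div_self (Nat.factorial_pos (t+2))]
      · -- k < t
        rw [Nat.choose_eq_zero_of_lt hkt, Nat.choose_eq_zero_of_lt (by omega),
          Nat.choose_eq_zero_of_lt (by omega)]
        simp

lemma sum_lah_eq (k : ℕ) (hk : 1 ≤ k) :
    ∑ l ∈ Icc 1 k, lah k l = ∑ j ∈ range (k+1), stirlingFirst k j * bell j := by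
  obtain ⟨m, rfl⟩ : ∃ m, k = m + 1 := ⟨k-1, by omega⟩
  have h1 : ∑ l ∈ Icc 1 (m+1), lah (m+1) l = ∑ l ∈ range (m+1), lah (m+1) (l+1) := by
    rw [← Finset.Ico_add_one_right_eq_Icc, Finset.sum_Ico_eq_sum_range]
    simp [Nat.add_comm]
  have h2 : ∀ l, lah (m+1) (l+1) = lahRec (m+1) (l+1) := by
    intro l
    rw [lahRec_closed]
    simp [lah]
  have h3 : ∑ l ∈ range (m+1), lahRec (m+1) (l+1) = ∑ l ∈ range (m+2), lahRec (m+1) l := by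
    rw [Finset.sum_range_succ' (fun l => lahRec (m+1) l) (m+1), lahRec_zero, add_zero]
  rw [h1]
  simp only [h2]
  rw [h3]
  have h4 : ∀ l, lahRec (m+1) l
      = ∑ j ∈ range (m+2), stirlingFirst (m+1) j * stirlingSecond j l :=
    fun l => lahRec_eq_sum (m+1) l
  simp only [h4]
  rw [Finset.sum_comm]
  apply Finset.sum_congr rfl
  intro j hj
  rw [← Finset.mul_sum]
  congr 1
  rw [bell]
  symm
  apply Finset.sum_subset
  · exact Finset.range_subset_range.2 (by have := Finset.mem_range.1 hj; omega)
  · intro x _ hx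
    have : j < x := by by_contra h; exact hx (Finset.mem_range.2 (by omega))
    exact stirlingSecond_eq_zero this

/-- Qi's formula
`B_n = ∑_{k=1}^n (−1)^{n−k} · (∑_{ℓ=1}^k L(k,ℓ)) · S(n,k)` (for `n ≥ 1`). -/
theorem bell_eq_lah_stirling_sum (n : ℕ) (hn : 1 ≤ n) :
    (bell n : ℤ) = ∑ k ∈ Finset.Icc 1 n,
      (-1 : ℤ) ^ (n - k) * (∑ l ∈ Finset.Icc 1 k, (lah k l : ℤ)) *
        (stirlingSecond n k : ℤ) := by
  symm
  have hA : ∀ k ∈ Icc 1 n,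
      (-1:ℤ)^(n-k) * (∑ l ∈ Icc 1 k, (lah k l : ℤ)) * (stirlingSecond n k : ℤ)
      = ∑ j ∈ range (n+1),
          (-1:ℤ)^(n-k) * ((stirlingFirst k j : ℤ) * (bell j : ℤ)) * (stirlingSecond n k : ℤ) := by
    intro k hk
    rw [Finset.mem_Icc] at hk
    have hcast : (∑ l ∈ Icc 1 k, (lah k l : ℤ))
        = ∑ j ∈ range (k+1), (stirlingFirst k j : ℤ) * (bell j : ℤ) := by
      have := congrArg (Nat.cast : ℕ → ℤ) (sum_lah_eq k hk.1)
      push_cast at this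
      exact this
    rw [hcast, Finset.mul_sum, Finset.sum_mul]
    apply Finset.sum_subset
    · exact Finset.range_subset_range.2 (by omega)
    · intro x _ hx
      have : k < x := by by_contra h; exact hx (Finset.mem_range.2 (by omega))
      simp [stirlingFirst_eq_zero this]
  rw [Finset.sum_congr rfl hA]
  have hB : ∑ k ∈ Icc 1 n, (∑ j ∈ range (n+1),
        (-1:ℤ)^(n-k) * ((stirlingFirst k j : ℤ) * (bell j : ℤ)) * (stirlingSecond n k : ℤ))
      = ∑ k ∈ range (n+1), (∑ j ∈ range (n+1),
        (-1:ℤ)^(n-k) * ((stirlingFirst k j : ℤ) * (bell j : ℤ)) * (stirlingSecond n k : ℤ)) := by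
    apply Finset.sum_subset
    · intro x hx; rw [Finset.mem_Icc] at hx; exact Finset.mem_range.2 (by omega)
    · intro x hx hx2
      have hx0 : x = 0 := by
        rw [Finset.mem_range] at hx; rw [Finset.mem_Icc] at hx2; omega
      subst hx0
      apply Finset.sum_eq_zero; intro j _
      obtain ⟨m, rfl⟩ : ∃ m, n = m+1 := ⟨n-1, by omega⟩
      simp [stirlingSecond_zero]
  rw [hB, Finset.sum_comm]
  have hsgn : ∀ k j : ℕ, k ≤ n → ((-1:ℤ))^(n-k) = (-1)^(n+j) * (-1)^(k+j) := by
    intro k j hk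
    rw [← pow_add]
    have h : n + j + (k + j) = (n - k) + 2*(k+j) := by omega
    rw [h, pow_add, pow_mul]
    norm_num
  have hC : ∀ j ∈ range (n+1),
      (∑ k ∈ range (n+1),
        (-1:ℤ)^(n-k) * ((stirlingFirst k j : ℤ) * (bell j : ℤ)) * (stirlingSecond n k : ℤ))
      = (bell j : ℤ) * ((-1:ℤ)^(n+j) * (if j = n then 1 else 0)) := by
    intro j hj
    have hterm : ∀ k ∈ range (n+1),
        (-1:ℤ)^(n-k) * ((stirlingFirst k j : ℤ) * (bell j : ℤ)) * (stirlingSecond n k : ℤ)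
        = (bell j:ℤ) * ((-1:ℤ)^(n+j)
            * ((stirlingSecond n k:ℤ) * ((-1:ℤ)^(k+j) * (stirlingFirst k j : ℤ)))) := by
      intro k hk
      rw [hsgn k j (by have := Finset.mem_range.1 hk; omega)]
      ring
    rw [Finset.sum_congr rfl hterm, ← Finset.mul_sum, ← Finset.mul_sum,
      stirling_orthogonality n j (by have := Finset.mem_range.1 hj; omega)]
  rw [Finset.sum_congr rfl hC]
  rw [Finset.sum_eq_single n]
  · have : (-1:ℤ)^(n+n) = 1 := by rw [← two_mul, pow_mul]; norm_num
    simp [this]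
  · intro b _ hb; simp [hb]
  · intro h; exact absurd (Finset.self_mem_range_succ n) h
end

section
/- The q-Lah numbers satisfy the recurrence L_q(n+1,k) = q^{n+k−1}·L_q(n,k−1) + [n+k]_q·L_q(n,k). -/
open Finset

/-- We work over the field `ℚ(q)` of rational functions, with `q` the generic
(transcendental) parameter. -/
noncomputable def q : RatFunc ℚ := RatFunc.X

/-- The `q`-integer `[m]_q = 1 + q + ⋯ + q^{m−1}`. -/
noncomputable def qint (m : ℕ) : RatFunc ℚ := ∑ i ∈ Finset.range m, q ^ i

/-- The `q`-factorial `[m]_q! = ∏_{i=1}^m [i]_q`. -/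
noncomputable def qfact (m : ℕ) : RatFunc ℚ := ∏ i ∈ Finset.Icc 1 m, qint i

/-- The Gaussian binomial coefficient `C(m,k)_q = ∏_{j=1}^k (q^{m−j+1}−1)/(q^j−1)`. -/
noncomputable def qbinom (m k : ℕ) : RatFunc ℚ :=
  ∏ j ∈ Finset.Icc 1 k, (q ^ (m + 1 - j) - 1) / (q ^ j - 1)

/-- The `q`-Lah numbers `L_q(n,k) = C(n,k)_q · ([n−1]_q!/[k−1]_q!) · q^{k(k−1)}`
for `n ≥ k ≥ 1`, with `L_q(0,0) = 1` and `L_q(n,k) = 0` for `k > n` or `k = 0 < n`. -/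
noncomputable def qLah (n k : ℕ) : RatFunc ℚ :=
  if k = 0 then (if n = 0 then 1 else 0)
  else qbinom n k * (qfact (n - 1) / qfact (k - 1)) * q ^ (k * (k - 1))

open Polynomial

lemma pow_sub_one_ne (j : ℕ) (hj : 1 ≤ j) : q ^ j - 1 ≠ 0 := by
  have : q ^ j - 1 = algebraMap ℚ[X] (RatFunc ℚ) (X ^ j - 1) := by
    simp [q, RatFunc.algebraMap_X, map_sub, map_pow]
  rw [this]
  simp only [ne_eq, map_eq_zero_iff _ (IsFractionRing.injective ℚ[X] (RatFunc ℚ))]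
  have := Polynomial.X_pow_sub_C_ne_zero (R := ℚ) (by omega : 0 < j) 1
  simpa using this

lemma q_sub_one_ne : q - 1 ≠ 0 := by simpa using pow_sub_one_ne 1 le_rfl
lemma qint_mul (m : ℕ) : qint m * (q - 1) = q ^ m - 1 := geom_sum_mul q m
lemma qint_eq (m : ℕ) : qint m = (q ^ m - 1) / (q - 1) := by
  rw [eq_div_iff q_sub_one_ne, qint_mul]
lemma qint_ne (m : ℕ) (hm : 1 ≤ m) : qint m ≠ 0 := by
  intro h
  have := qint_mul m
  rw [h, zero_mul] at this
  exact pow_sub_one_ne m hm this.symm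
lemma qfact_ne (m : ℕ) : qfact m ≠ 0 := by
  rw [qfact, Finset.prod_ne_zero_iff]
  exact fun i hi => qint_ne i (mem_Icc.mp hi).1

noncomputable def Pn (n k : ℕ) : RatFunc ℚ := ∏ j ∈ Finset.Icc 1 k, (q ^ (n + 1 - j) - 1)
noncomputable def Dk (k : ℕ) : RatFunc ℚ := ∏ j ∈ Finset.Icc 1 k, (q ^ j - 1)

lemma qbinom_eq (n k : ℕ) : qbinom n k = Pn n k / Dk k := by
  rw [qbinom, Pn, Dk, Finset.prod_div_distrib]
lemma Dk_ne (k : ℕ) : Dk k ≠ 0 := by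
  rw [Dk, Finset.prod_ne_zero_iff]
  exact fun i hi => pow_sub_one_ne i (mem_Icc.mp hi).1
lemma Pn_top (n k : ℕ) : Pn n (k + 1) = Pn n k * (q ^ (n - k) - 1) := by
  rw [Pn, Pn, Finset.prod_Icc_succ_top (by omega : 1 ≤ k + 1),
    show n + 1 - (k + 1) = n - k by omega]
lemma Dk_top (k : ℕ) : Dk (k + 1) = Dk k * (q ^ (k + 1) - 1) := by
  rw [Dk, Dk, Finset.prod_Icc_succ_top (by omega : 1 ≤ k + 1)]
lemma qfact_top (m : ℕ) : qfact (m + 1) = qfact m * qint (m + 1) := by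
  rw [qfact, qfact, Finset.prod_Icc_succ_top (by omega : 1 ≤ m + 1)]
lemma Pn_shift (n : ℕ) : ∀ k, Pn (n + 1) (k + 1) = (q ^ (n + 1) - 1) * Pn n k := by
  intro k
  induction k with
  | zero => rw [Pn, Pn]; simp [Finset.Icc_self]
  | succ k ih =>
    rw [Pn_top, ih, Pn_top, show n + 1 - (k + 1) = n - k by omega, mul_assoc]
lemma qbinom_zero_of_lt (m k : ℕ) (h : m < k) : qbinom m k = 0 := by
  rw [qbinom]
  apply Finset.prod_eq_zero (i := m + 1) (mem_Icc.mpr ⟨by omega, by omega⟩)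
  rw [show m + 1 - (m + 1) = 0 by omega]
  simp
lemma qLah_pos (n k : ℕ) (hk : k ≠ 0) :
    qLah n k = qbinom n k * (qfact (n - 1) / qfact (k - 1)) * q ^ (k * (k - 1)) := by
  rw [qLah, if_neg hk]
lemma qbinom_one (m : ℕ) : qbinom m 1 = qint m := by
  rw [qbinom, Finset.Icc_self, Finset.prod_singleton, qint_eq]
  norm_num
lemma qfact_zero : qfact 0 = 1 := by rw [qfact]; simp

/-- The `q`-Lah numbers satisfy the recurrence
`L_q(n+1,k) = q^{n+k−1}·L_q(n,k−1) + [n+k]_q·L_q(n,k)` (for `k ≥ 1`, the term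
`L_q(n,k−1)` meaning `0` when `k = 0`). -/
theorem qLah_recurrence (n k : ℕ) (hk : 1 ≤ k) :
    qLah (n + 1) k = q ^ (n + k - 1) * qLah n (k - 1) + qint (n + k) * qLah n k := by
  rcases lt_or_ge (n + 1) k with hbig | hkn
  · have h1 : qLah (n + 1) k = 0 := by
      rw [qLah_pos _ _ (by omega), qbinom_zero_of_lt _ _ (by omega)]; ring
    have h2 : qLah n (k - 1) = 0 := by
      rw [qLah_pos _ _ (by omega), qbinom_zero_of_lt _ _ (by omega)]; ring
    have h3 : qLah n k = 0 := by
      rw [qLah_pos _ _ (by omega), qbinom_zero_of_lt _ _ (by omega)]; ring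
    rw [h1, h2, h3]; ring
  · rcases eq_or_lt_of_le hk with hk1 | hk2
    · -- k = 1
      have hk1' : k = 1 := hk1.symm
      subst hk1'
      rcases Nat.eq_zero_or_pos n with hn | hn
      · subst hn
        rw [qLah_pos 1 1 one_ne_zero, qLah_pos 0 1 one_ne_zero, qbinom_one, qbinom_one]
        simp [qLah, qint, qfact_zero]
      · obtain ⟨m, rfl⟩ : ∃ m, n = m + 1 := ⟨n - 1, by omega⟩
        rw [qLah_pos _ _ one_ne_zero, qLah_pos _ _ one_ne_zero, qbinom_one, qbinom_one]
        rw [show (m + 1 : ℕ) - 1 = m from rfl, show (1:ℕ) - 1 = 0 from rfl,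
          show (m + 1 + 1 : ℕ) - 1 = m + 1 from rfl]
        rw [qLah, if_pos rfl, if_neg (by omega), qfact_zero, qfact_top]
        ring
    · -- 2 ≤ k ≤ n+1
      obtain ⟨a, rfl⟩ : ∃ a, k = a + 2 := ⟨k - 2, by omega⟩
      obtain ⟨b, rfl⟩ : ∃ b, n = a + b + 1 := ⟨n - a - 1, by omega⟩
      have n1 := Dk_ne (a + 1)
      have n2 := qfact_ne a
      have n3 := q_sub_one_ne
      have n4 := pow_sub_one_ne (a + 1) (by omega)
      have n5 := pow_sub_one_ne (a + 2) (by omega)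
      have e1 : Pn (a + b + 2) (a + 2) = (q ^ (a + b + 2) - 1) * Pn (a + b + 1) (a + 1) :=
        Pn_shift (a + b + 1) (a + 1)
      have e2 : Dk (a + 2) = Dk (a + 1) * (q ^ (a + 2) - 1) := Dk_top (a + 1)
      have e3 : qfact (a + b + 1) = qfact (a + b) * qint (a + b + 1) := qfact_top (a + b)
      have e4 : qfact (a + 1) = qfact a * qint (a + 1) := qfact_top a
      have e5 : Pn (a + b + 1) (a + 2) = Pn (a + b + 1) (a + 1) * (q ^ b - 1) := by
        have := Pn_top (a + b + 1) (a + 1)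
        rwa [show a + b + 1 - (a + 1) = b by omega] at this
      have L1 : qLah (a + b + 2) (a + 2) =
          ((q ^ (a + b + 2) - 1) * Pn (a + b + 1) (a + 1) * (qfact (a + b) * (q ^ (a + b + 1) - 1))
            * q ^ ((a + 2) * (a + 1))) /
          (Dk (a + 1) * (q ^ (a + 2) - 1) * (qfact a * (q ^ (a + 1) - 1))) := by
        rw [qLah_pos _ _ (by omega), qbinom_eq,
          show a + b + 2 - 1 = a + b + 1 from rfl, show a + 2 - 1 = a + 1 from rfl,
          e1, e2, e3, e4, qint_eq (a + b + 1), qint_eq (a + 1)]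
        field_simp
      have L2 : qLah (a + b + 1) (a + 1) =
          (Pn (a + b + 1) (a + 1) * qfact (a + b) * q ^ ((a + 1) * a)) /
          (Dk (a + 1) * qfact a) := by
        rw [qLah_pos _ _ (by omega), qbinom_eq,
          show a + b + 1 - 1 = a + b from rfl, show a + 1 - 1 = a from rfl]
        field_simp
      have L3 : qLah (a + b + 1) (a + 2) =
          (Pn (a + b + 1) (a + 1) * (q ^ b - 1) * qfact (a + b) * q ^ ((a + 2) * (a + 1))
            * (q - 1)) /
          (Dk (a + 1) * (q ^ (a + 2) - 1) * (qfact a * (q ^ (a + 1) - 1))) := by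
        rw [qLah_pos _ _ (by omega), qbinom_eq,
          show a + b + 1 - 1 = a + b from rfl, show a + 2 - 1 = a + 1 from rfl,
          e5, e2, e4, qint_eq (a + 1)]
        field_simp
      rw [show a + 2 - 1 = a + 1 from rfl, L1, L2, L3, qint_eq (a + b + 1 + (a + 2)),
        show a + b + 1 + (a + 2) - 1 = 2 * a + b + 2 by omega,
        show a + b + 1 + (a + 2) = 2 * a + b + 3 by omega]
      rw [div_mul_div_comm, ← mul_div_assoc]
      rw [div_add_div _ _ (mul_ne_zero n1 n2)
        (mul_ne_zero n3 (mul_ne_zero (mul_ne_zero n1 n5) (mul_ne_zero n2 n4)))]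
      rw [div_eq_div_iff (mul_ne_zero (mul_ne_zero n1 n5) (mul_ne_zero n2 n4))
        (mul_ne_zero (mul_ne_zero n1 n2)
          (mul_ne_zero n3 (mul_ne_zero (mul_ne_zero n1 n5) (mul_ne_zero n2 n4))))]
      ring
end
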